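/- Let n ≥ 5 and let H = C(n,n−1;1). Let M be the n × n real matrix whose (i,j)-entry is the number of elements h ∈ H with h(j) = i. Then the characteristic polynomial of M equals (x − (n−1)(n−2)!) · (x − (n−3)!)^{n−2} · (x + (n−2)!). -/

import Mathlib

/-- `cycSet n k r` is the set `C(n,k;r)` of `k`-cycles of the symmetric group on `Fin n`
moving every point in `{0, 1, ..., r-1}` (the first `r` points). -/
def cycSet (n k r : ℕ) : Set (Equiv.Perm (Fin n)) :=
  {σ | σ.IsCycle ∧ σ.support.card = k ∧ ∀ i : Fin n, (i : ℕ) < r → σ i ≠ i}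

open Classical in
/-- The adjacency matrix of the Cayley graph `Cay(S_n, C(n,k;r))`. -/
noncomputable def adjMat (n k r : ℕ) :
    Matrix (Equiv.Perm (Fin n)) (Equiv.Perm (Fin n)) ℝ :=
  fun g h => if g⁻¹ * h ∈ cycSet n k r then 1 else 0

/-- `μ` is an eigenvalue of the adjacency matrix of `Cay(S_n, C(n,k;r))`. -/
def IsAdjEigenvalue (n k r : ℕ) (μ : ℝ) : Prop :=
  ∃ v : Equiv.Perm (Fin n) → ℝ, v ≠ 0 ∧ (adjMat n k r).mulVec v = μ • v

/-- The dimension of the `μ`-eigenspace of the adjacency matrix of `Cay(S_n, C(n,k;r))`,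
acting on `ℝ^{S_n}`. -/
noncomputable def eigMult (n k r : ℕ) (μ : ℝ) : ℕ :=
  Module.finrank ℝ (Module.End.eigenspace (adjMat n k r).mulVecLin μ)
/-- The `n × n` matrix of the action of the formal sum of `H = C(n,n-1;1)` on the natural
permutation module `ℝⁿ`: the `(i,j)`-entry is the number of `h ∈ H` with `h j = i`. -/
noncomputable def permMat (n : ℕ) : Matrix (Fin n) (Fin n) ℝ :=
  fun i j => (Nat.card {h : Equiv.Perm (Fin n) // h ∈ cycSet n (n - 1) 1 ∧ h j = i} : ℝ)


section Aux

open Equiv Equiv.Perm Finset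

variable {α : Type*} [Fintype α] [DecidableEq α]

/-- Insertion: multiplying a cycle by a transposition with a fixed point gives a cycle. -/
lemma isCycle_insert {τ : Perm α} (hτ : τ.IsCycle) {x y : α}
    (hx : τ x ≠ x) (hy : τ y = y) : (Equiv.swap y x * τ).IsCycle := by
  have hxy : x ≠ y := by rintro rfl; exact hx hy
  set g := Equiv.swap y x * τ with hg
  have hgy : g y = x := by simp [hg, hy]
  have gapp : ∀ z, z ≠ y → τ z ≠ x → g z = τ z := by
    intro z hzy hzx
    have hτzy : τ z ≠ y := fun h => hzy (τ.injective (h.trans hy.symm))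
    simp only [hg, Perm.mul_apply]
    exact Equiv.swap_apply_of_ne_of_ne hτzy hzx
  have horb : ∀ i : ℕ, (τ ^ i) x ≠ y := by
    intro i h
    have h2 : (τ ^ i) y = y := Function.IsFixedPt.perm_pow hy i
    exact hxy ((τ ^ i).injective (h.trans h2.symm))
  have main : ∀ i : ℕ, ∃ j : ℤ, (g ^ j) x = (τ ^ i) x := by
    intro i
    induction i with
    | zero => exact ⟨0, rfl⟩
    | succ i ih =>
      obtain ⟨j, hj⟩ := ih
      by_cases hcase : τ ((τ ^ i) x) = x
      · refine ⟨0, ?_⟩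
        have : (τ ^ (i+1)) x = x := by rw [pow_succ', Perm.mul_apply, hcase]
        rw [this]; rfl
      · refine ⟨1 + j, ?_⟩
        rw [zpow_add, zpow_one, Perm.mul_apply, hj, pow_succ', Perm.mul_apply]
        exact gapp _ (horb i) hcase
  have hgx : g x ≠ x := by
    rw [gapp x hxy hx]; exact hx
  refine ⟨x, hgx, ?_⟩
  intro z hz
  by_cases hzy : z = y
  · subst hzy
    refine ⟨-1, ?_⟩
    rw [zpow_neg_one]
    exact Equiv.Perm.inv_eq_iff_eq.mpr hgy.symm
  · have hτz : τ z ≠ z := by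
      intro h
      apply hz
      have hzx : z ≠ x := by rintro rfl; exact hx h
      have : τ z ≠ x := h.symm ▸ hzx
      rw [gapp z hzy this, h]
    obtain ⟨i, -, -, hi⟩ := (hτ.sameCycle hx hτz).exists_pow_eq τ
    obtain ⟨j, hj⟩ := main i
    exact ⟨j, by rw [hj, hi]⟩

lemma support_insert {τ : Perm α} {x y : α}
    (hx : τ x ≠ x) (hy : τ y = y) :
    (Equiv.swap y x * τ).support = insert y τ.support := by
  have hxy : x ≠ y := by rintro rfl; exact hx hy
  ext z
  simp only [Perm.mem_support, Finset.mem_insert, Perm.mul_apply]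
  by_cases hzy : z = y
  · subst hzy
    simp only [hy, Equiv.swap_apply_left]
    simp only [true_or, iff_true]
    exact hxy
  · simp only [hzy, false_or]
    constructor
    · intro h
      by_cases hτz : τ z = z
      · exfalso
        have hzx : z ≠ x := by rintro rfl; exact hx hτz
        rw [hτz, Equiv.swap_apply_of_ne_of_ne hzy hzx] at h
        exact h rfl
      · exact hτz
    · intro hτz
      have hτzy : τ z ≠ y := fun hh => hzy (τ.injective (hh.trans hy.symm))
      by_cases hτzx : τ z = x
      · rw [hτzx, Equiv.swap_apply_right]; exact Ne.symm hzy
      · rw [Equiv.swap_apply_of_ne_of_ne hτzy hτzx]; exact hτz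

open scoped Classical in
noncomputable def cnt1 (s : Finset α) : ℕ :=
  Nat.card {σ : Perm α // σ.IsCycle ∧ σ.support = s}

open scoped Classical in
noncomputable def cnt2 (s : Finset α) (x y : α) : ℕ :=
  Nat.card {σ : Perm α // σ.IsCycle ∧ σ.support = s ∧ σ y = x}

lemma card_partition {β : Type*} (P : Perm α → Prop) (A : Finset β) (Q : β → Perm α → Prop)
    (h : ∀ σ, P σ ↔ ∃ f ∈ A, Q f σ)
    (hdisj : ∀ f ∈ A, ∀ f' ∈ A, f ≠ f' → ∀ σ, Q f σ → ¬ Q f' σ) :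
    Nat.card {σ : Perm α // P σ} = ∑ f ∈ A, Nat.card {σ : Perm α // Q f σ} := by
  classical
  rw [Nat.card_eq_fintype_card, Fintype.card_subtype]
  have hsum : ∀ f ∈ A, Nat.card {σ : Perm α // Q f σ}
      = (Finset.univ.filter (Q f)).card := by
    intro f _
    rw [Nat.card_eq_fintype_card, Fintype.card_subtype]
  rw [Finset.sum_congr rfl hsum]
  rw [← Finset.card_biUnion]
  · congr 1
    ext σ
    simp only [Finset.mem_filter, Finset.mem_biUnion, Finset.mem_univ, true_and, h]
  · intro f hf f' hf' hne
    rw [Function.onFun, Finset.disjoint_left]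
    intro σ hσ hσ'
    simp only [Finset.mem_filter, Finset.mem_univ, true_and] at hσ hσ'
    exact hdisj f hf f' hf' hne σ hσ hσ'

lemma cnt1_card_two {s : Finset α} (hs : s.card = 2) : cnt1 s = 1 := by
  classical
  obtain ⟨a, b, hab, rfl⟩ := Finset.card_eq_two.mp hs
  have hiff : ∀ σ : Perm α, (σ.IsCycle ∧ σ.support = ({a, b} : Finset α)) ↔ σ = swap a b := by
    intro σ
    constructor
    · rintro ⟨hc, hsupp⟩
      have hcard : σ.support.card = 2 := by rw [hsupp]; exact Finset.card_pair hab
      obtain ⟨u, v, huv, rfl⟩ := card_support_eq_two.mp hcard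
      rw [support_swap huv] at hsupp
      have hu : u = a ∨ u = b := by
        have : u ∈ ({a, b} : Finset α) := hsupp ▸ (by simp)
        simpa using this
      have hv : v = a ∨ v = b := by
        have : v ∈ ({a, b} : Finset α) := hsupp ▸ (by simp)
        simpa using this
      rcases hu with rfl | rfl
      · rcases hv with rfl | rfl
        · exact absurd rfl huv
        · rfl
      · rcases hv with rfl | rfl
        · exact Equiv.swap_comm _ _
        · exact absurd rfl huv
    · rintro rfl
      exact ⟨isCycle_swap hab, support_swap hab⟩
  rw [cnt1, Nat.card_congr (Equiv.subtypeEquivRight hiff), Nat.card_eq_fintype_card,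
    Fintype.card_subtype_eq]

lemma cnt2_eq_cnt1 {s : Finset α} {x y : α} (hx : x ∈ s) (hy : y ∈ s) (hxy : x ≠ y)
    (hcard : 3 ≤ s.card) : cnt2 s x y = cnt1 (s.erase y) := by
  classical
  have key : ∀ σ : Perm α, (σ.IsCycle ∧ σ.support = s ∧ σ y = x) →
      ((swap y x * σ).IsCycle ∧ (swap y x * σ).support = s.erase y) := by
    rintro σ ⟨hc, hsupp, hσy⟩
    have hσyy : σ y ≠ y := by rw [hσy]; exact hxy
    have hσσy : σ (σ y) ≠ y := by
      intro h
      have := hc.eq_swap_of_apply_apply_eq_self hσyy h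
      have hc2 : σ.support.card = 2 := by
        rw [this]; exact card_support_swap (Ne.symm hσyy)
      rw [hsupp] at hc2
      omega
    constructor
    · have := hc.swap_mul hσyy hσσy
      rwa [hσy] at this
    · have := Equiv.Perm.support_swap_mul_eq σ y hσσy
      rw [hσy] at this
      rw [this, hsupp, Finset.sdiff_singleton_eq_erase]
  have key2 : ∀ τ : Perm α, (τ.IsCycle ∧ τ.support = s.erase y) →
      ((swap y x * τ).IsCycle ∧ (swap y x * τ).support = s ∧ (swap y x * τ) y = x) := by
    rintro τ ⟨hc, hsupp⟩
    have hτx : τ x ≠ x := by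
      rw [← Perm.mem_support, hsupp]
      exact Finset.mem_erase.mpr ⟨hxy, hx⟩
    have hτy : τ y = y := by
      rw [← Perm.notMem_support, hsupp]
      exact Finset.notMem_erase y s
    refine ⟨isCycle_insert hc hτx hτy, ?_, ?_⟩
    · rw [support_insert hτx hτy, hsupp, Finset.insert_erase hy]
    · simp [Perm.mul_apply, hτy]
  rw [cnt1, cnt2]
  apply Nat.card_congr
  refine ⟨fun σ => ⟨swap y x * σ.1, ?_⟩, fun τ => ⟨swap y x * τ.1, ?_⟩, ?_, ?_⟩
  · exact key σ.1 σ.2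
  · exact key2 τ.1 τ.2
  · intro σ
    ext1
    simp [← mul_assoc, swap_mul_self]
  · intro τ
    ext1
    simp [← mul_assoc, swap_mul_self]

lemma cnt1_factorial (k : ℕ) : ∀ (s : Finset α), s.card = k → 2 ≤ k →
    cnt1 s = (k-1).factorial := by
  induction k using Nat.strong_induction_on with
  | _ k ih =>
    intro s hs hk
    rcases eq_or_lt_of_le hk with h2 | h3
    · rw [cnt1_card_two (by omega), ← h2]
      rfl
    · obtain ⟨y, hy⟩ : s.Nonempty := Finset.card_pos.mp (by omega)
      have hpart := card_partition (fun σ : Perm α => σ.IsCycle ∧ σ.support = s) (s.erase y)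
        (fun x σ => σ.IsCycle ∧ σ.support = s ∧ σ y = x)
        (by
          intro σ
          constructor
          · rintro ⟨hc, hsupp⟩
            have hymem : y ∈ σ.support := hsupp.symm ▸ hy
            refine ⟨σ y, Finset.mem_erase.mpr ⟨Perm.mem_support.mp hymem, ?_⟩, hc, hsupp, rfl⟩
            rw [← hsupp]
            exact Equiv.Perm.apply_mem_support.mpr hymem
          · rintro ⟨x, hxmem, hc, hsupp, -⟩
            exact ⟨hc, hsupp⟩)
        (by
          rintro f hf f' hf' hne σ ⟨-, -, h1⟩ ⟨-, -, h2⟩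
          exact hne (h1 ▸ h2 ▸ rfl))
      have heach : ∀ x ∈ s.erase y, cnt2 s x y = (k-2).factorial := by
        intro x hx
        rw [cnt2_eq_cnt1 (Finset.mem_of_mem_erase hx) hy (Finset.ne_of_mem_erase hx)
          (by omega)]
        rw [ih (k-1) (by omega) _ (by rw [Finset.card_erase_of_mem hy, hs]) (by omega)]
        congr 1
      have : cnt1 s = ∑ x ∈ s.erase y, cnt2 s x y := hpart
      rw [this, Finset.sum_congr rfl heach, Finset.sum_const,
        Finset.card_erase_of_mem hy, hs, smul_eq_mul,
        show k - 1 = (k-2) + 1 by omega, Nat.factorial_succ]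

lemma count_eq (n : ℕ) (hn : 5 ≤ n) (i j : Fin n) :
    Nat.card {h : Perm (Fin n) // h ∈ cycSet n (n-1) 1 ∧ h j = i} =
    if i = j then (if (i:ℕ) = 0 then 0 else (n-2).factorial)
    else if (i:ℕ) = 0 ∨ (j:ℕ) = 0 then (n-2) * (n-3).factorial
    else (n-3) * (n-3).factorial := by
  classical
  set z : Fin n := ⟨0, by omega⟩ with hz
  have hzval : (z : ℕ) = 0 := rfl
  have hmem : ∀ h : Equiv.Perm (Fin n), (h ∈ cycSet n (n-1) 1 ∧ h j = i) ↔
      (h.IsCycle ∧ h.support.card = n-1 ∧ h z ≠ z ∧ h j = i) := by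
    intro h
    simp only [cycSet, Set.mem_setOf_eq]
    constructor
    · rintro ⟨⟨hc, hcard, hmove⟩, hji⟩
      exact ⟨hc, hcard, hmove z (by omega), hji⟩
    · rintro ⟨hc, hcard, hmove, hji⟩
      refine ⟨⟨hc, hcard, ?_⟩, hji⟩
      intro w hw
      have : w = z := Fin.ext (by omega)
      rwa [this]
  rw [Nat.card_congr (Equiv.subtypeEquivRight hmem)]
  by_cases hij : i = j
  · subst hij
    by_cases hiz : (i:ℕ) = 0
    · have hiz' : i = z := Fin.ext hiz
      rw [if_pos rfl, if_pos hiz, Nat.card_eq_zero]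
      left
      refine ⟨fun ⟨h, _, _, hmove, hji⟩ => ?_⟩
      rw [hiz'] at hji
      exact hmove hji
    · rw [if_pos rfl, if_neg hiz]
      have hiff : ∀ h : Equiv.Perm (Fin n),
          (h.IsCycle ∧ h.support.card = n-1 ∧ h z ≠ z ∧ h i = i) ↔
          (h.IsCycle ∧ h.support = Finset.univ.erase i) := by
        intro h
        constructor
        · rintro ⟨hc, hcard, hmove, hfix⟩
          refine ⟨hc, ?_⟩
          apply Finset.eq_of_subset_of_card_le
          · intro w hw
            refine Finset.mem_erase.mpr ⟨?_, Finset.mem_univ w⟩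
            rintro rfl
            exact Perm.mem_support.mp hw hfix
          · rw [Finset.card_erase_of_mem (Finset.mem_univ i), Finset.card_univ,
              Fintype.card_fin, hcard]
        · rintro ⟨hc, hsupp⟩
          refine ⟨hc, ?_, ?_, ?_⟩
          · rw [hsupp, Finset.card_erase_of_mem (Finset.mem_univ i), Finset.card_univ,
              Fintype.card_fin]
          · apply Perm.mem_support.mp
            rw [hsupp]
            refine Finset.mem_erase.mpr ⟨?_, Finset.mem_univ z⟩
            intro hzi
            exact hiz (hzi ▸ hzval)
          · apply Perm.notMem_support.mp
            rw [hsupp]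
            exact Finset.notMem_erase i Finset.univ
      rw [Nat.card_congr (Equiv.subtypeEquivRight hiff)]
      have : cnt1 (Finset.univ.erase i : Finset (Fin n)) = (n - 2).factorial := by
        rw [cnt1_factorial (n-1) _ (by
          rw [Finset.card_erase_of_mem (Finset.mem_univ i), Finset.card_univ,
            Fintype.card_fin]) (by omega),
          show n - 1 - 1 = n - 2 from by omega]
      exact this
  · -- i ≠ j
    simp only [if_neg hij]
    set A : Finset (Fin n) := ((Finset.univ.erase i).erase j).erase z with hA
    have hpart := card_partition
      (fun h : Equiv.Perm (Fin n) => h.IsCycle ∧ h.support.card = n-1 ∧ h z ≠ z ∧ h j = i)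
      A (fun f h => h.IsCycle ∧ h.support = Finset.univ.erase f ∧ h j = i)
      (by
        intro h
        constructor
        · rintro ⟨hc, hcard, hmove, hji⟩
          have hcompl : h.supportᶜ.card = 1 := by
            rw [Finset.card_compl, hcard, Fintype.card_fin]
            omega
          obtain ⟨f, hf⟩ := Finset.card_eq_one.mp hcompl
          have hsupp : h.support = Finset.univ.erase f := by
            rw [← Finset.compl_singleton, ← hf, compl_compl]
          have hjmem : j ∈ h.support := Perm.mem_support.mpr (by rw [hji]; exact hij)
          have himem : i ∈ h.support := by
            rw [← hji]; exact Equiv.Perm.apply_mem_support.mpr hjmem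
          have hzmem : z ∈ h.support := Perm.mem_support.mpr hmove
          refine ⟨f, ?_, hc, hsupp, hji⟩
          rw [hA]
          refine Finset.mem_erase.mpr ⟨?_, Finset.mem_erase.mpr ⟨?_, Finset.mem_erase.mpr
            ⟨?_, Finset.mem_univ f⟩⟩⟩
          · intro hfz
            rw [hsupp, hfz] at hzmem
            exact (Finset.notMem_erase z _) hzmem
          · rintro rfl
            rw [hsupp] at hjmem
            exact (Finset.notMem_erase f _) hjmem
          · rintro rfl
            rw [hsupp] at himem
            exact (Finset.notMem_erase f _) himem
        · rintro ⟨f, hfA, hc, hsupp, hji⟩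
          have hzf : z ≠ f := by
            rw [hA] at hfA
            exact fun h => (Finset.mem_erase.mp hfA).1 h.symm
          refine ⟨hc, ?_, ?_, hji⟩
          · rw [hsupp, Finset.card_erase_of_mem (Finset.mem_univ f), Finset.card_univ,
              Fintype.card_fin]
          · apply Perm.mem_support.mp
            rw [hsupp]
            exact Finset.mem_erase.mpr ⟨hzf, Finset.mem_univ z⟩)
      (by
        rintro f hf f' hf' hne h2 ⟨-, h1, -⟩ ⟨-, hh2, -⟩
        apply hne
        by_contra hne'
        have hfmem : f ∈ Finset.univ.erase f' :=
          Finset.mem_erase.mpr ⟨hne', Finset.mem_univ f⟩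
        rw [← hh2, h1] at hfmem
        exact (Finset.notMem_erase f Finset.univ) hfmem)
    rw [hpart]
    have heach : ∀ f ∈ A, Nat.card {h : Equiv.Perm (Fin n) //
        h.IsCycle ∧ h.support = Finset.univ.erase f ∧ h j = i} = (n-3).factorial := by
      intro f hfA
      rw [hA] at hfA
      have hfi : f ≠ i := fun h =>
        (Finset.mem_erase.mp (Finset.mem_erase.mp (Finset.mem_erase.mp hfA).2).2).1 h
      have hfj : f ≠ j := fun h => (Finset.mem_erase.mp (Finset.mem_erase.mp hfA).2).1 h
      have hicard : (Finset.univ.erase f : Finset (Fin n)).card = n - 1 := by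
        rw [Finset.card_erase_of_mem (Finset.mem_univ f), Finset.card_univ, Fintype.card_fin]
      have h2 : cnt2 (Finset.univ.erase f : Finset (Fin n)) i j = (n-3).factorial := by
        rw [cnt2_eq_cnt1 (Finset.mem_erase.mpr ⟨Ne.symm hfi, Finset.mem_univ i⟩)
          (Finset.mem_erase.mpr ⟨Ne.symm hfj, Finset.mem_univ j⟩) hij (by omega)]
        have hjmem : j ∈ (Finset.univ.erase f : Finset (Fin n)) :=
          Finset.mem_erase.mpr ⟨Ne.symm hfj, Finset.mem_univ j⟩
        have hcc : ((Finset.univ.erase f).erase j : Finset (Fin n)).card = n - 2 := by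
          rw [Finset.card_erase_of_mem hjmem, hicard]
          omega
        rw [cnt1_factorial (n-2) _ hcc (by omega),
          show n - 2 - 1 = n - 3 from by omega]
      exact h2
    rw [Finset.sum_congr rfl heach, Finset.sum_const, smul_eq_mul]
    congr 1
    -- A.card
    have hcard1 : (Finset.univ.erase i : Finset (Fin n)).card = n - 1 := by
      rw [Finset.card_erase_of_mem (Finset.mem_univ i), Finset.card_univ, Fintype.card_fin]
    have hcard2 : ((Finset.univ.erase i).erase j : Finset (Fin n)).card = n - 2 := by
      rw [Finset.card_erase_of_mem
        (Finset.mem_erase.mpr ⟨Ne.symm hij, Finset.mem_univ j⟩), hcard1]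
      omega
    by_cases hzij : (i:ℕ) = 0 ∨ (j:ℕ) = 0
    · rw [if_pos hzij]
      have hznot : z ∉ (Finset.univ.erase i).erase j := by
        rcases hzij with h | h
        · have : z = i := Fin.ext (by omega)
          rw [this]
          simp
        · have : z = j := Fin.ext (by omega)
          rw [this]
          simp
      rw [hA, Finset.erase_eq_of_notMem hznot, hcard2]
    · rw [if_neg hzij]
      push_neg at hzij
      have hzmem : z ∈ (Finset.univ.erase i).erase j := by
        refine Finset.mem_erase.mpr ⟨?_, Finset.mem_erase.mpr ⟨?_, Finset.mem_univ z⟩⟩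
        · exact fun h => hzij.2 (h ▸ hzval)
        · exact fun h => hzij.1 (h ▸ hzval)
      rw [hA, Finset.card_erase_of_mem hzmem, hcard2,
        show n - 2 - 1 = n - 3 from by omega]

open Matrix Polynomial

noncomputable def Mx (n : ℕ) : Matrix (Fin n) (Fin n) ℝ := fun i j =>
  if i = j then (if (i:ℕ) = 0 then 0 else (((n-2).factorial : ℕ) : ℝ))
  else if (i:ℕ) = 0 ∨ (j:ℕ) = 0 then (((n-2) * (n-3).factorial : ℕ) : ℝ)
  else (((n-3) * (n-3).factorial : ℕ) : ℝ)

lemma charpoly_eval {n : ℕ} (A : Matrix (Fin n) (Fin n) ℝ) (x : ℝ) :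
    (A.charpoly).eval x = (x • (1 : Matrix (Fin n) (Fin n) ℝ) - A).det := by
  rw [Matrix.charpoly, ← Polynomial.coe_evalRingHom, RingHom.map_det]
  congr 1
  ext i j
  by_cases h : i = j
  · subst h; simp [charmatrix_apply_eq, Matrix.one_apply]
  · simp [charmatrix_apply_ne _ _ _ h, Matrix.one_apply, h]

theorem MxCharpoly (m : ℕ) :
    (Mx (m+5)).charpoly =
      (X - C (((m + 4) * (m + 3).factorial : ℕ) : ℝ)) *
      (X - C (((m + 2).factorial : ℕ) : ℝ)) ^ (m + 3) *
      (X + C (((m + 3).factorial : ℕ) : ℝ)) := by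
  set l2 : ℝ := (((m + 2).factorial : ℕ) : ℝ) with hl2def
  have hl2 : (0:ℝ) < l2 := by positivity
  apply Polynomial.eq_of_infinite_eval_eq
  apply Set.Infinite.mono (s := {l2}ᶜ)
  swap
  · exact Set.Finite.infinite_compl (Set.finite_singleton l2)
  intro x hx
  simp only [Set.mem_compl_iff, Set.mem_singleton_iff] at hx
  have hs : x - l2 ≠ 0 := sub_ne_zero.mpr hx
  set s : ℝ := x - l2 with hsdef
  set U : Matrix (Fin (m+5)) (Fin 2) ℝ :=
    fun i t => if t = 0 then 1 else (if (i:ℕ) = 0 then 1 else 0) with hU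
  set V : Matrix (Fin 2) (Fin (m+5)) ℝ :=
    fun t j => if t = 0 then ((m+2)*l2 + if (j:ℕ) = 0 then l2 else 0)
      else (l2 + if (j:ℕ) = 0 then -((m+5)*l2) else 0) with hV
  have hfact3 : (((m+3).factorial : ℕ) : ℝ) = (m+3) * l2 := by
    rw [show m + 3 = (m+2)+1 by ring, Nat.factorial_succ]; push_cast [hl2def]; ring
  have key : x • (1 : Matrix (Fin (m+5)) (Fin (m+5)) ℝ) - Mx (m+5) = s • (1 - (s⁻¹ • U) * V) := by
    ext i j
    simp only [Matrix.sub_apply, Matrix.smul_apply, Matrix.mul_apply]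
    simp only [Matrix.sub_apply, Matrix.smul_apply, Matrix.mul_apply, Matrix.one_apply,
      Fin.sum_univ_two, hU, hV, Mx, smul_eq_mul, Pi.smul_apply]
    rw [show m + 5 - 2 = m + 3 by omega, show m + 5 - 3 = m + 2 by omega]
    by_cases hij : i = j
    · subst hij
      by_cases hi : (i:ℕ) = 0 <;>
        simp only [if_pos rfl, hi, if_true, if_false, hfact3] <;>
        (push_cast; field_simp; push_cast [hl2def]; ring)
    · by_cases hi : (i:ℕ) = 0 <;> by_cases hj : (j:ℕ) = 0 <;>
        first
          | exact absurd (Fin.val_injective (hi.trans hj.symm)) hij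
          | (simp only [if_neg hij, hi, hj, if_true, if_false, or_true, true_or, or_self,
              hfact3] <;> (push_cast; field_simp; push_cast [hl2def]; ring))
  simp only [Set.mem_setOf_eq]
  rw [charpoly_eval, key, Matrix.det_smul]
  have onemul : (1 : Matrix (Fin (m+5)) (Fin (m+5)) ℝ) - (s⁻¹ • U) * V
      = 1 + (-(s⁻¹ • U)) * V := by rw [Matrix.neg_mul, ← sub_eq_add_neg]
  rw [onemul, Matrix.det_one_add_mul_comm]
  have hVU : (1 : Matrix (Fin 2) (Fin 2) ℝ) + V * -(s⁻¹ • U) =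
      !![1 - s⁻¹ * (((m:ℝ)*m + 7*m + 11)*l2), -(s⁻¹ * (((m:ℝ)+3)*l2));
         0, 1 + s⁻¹*(((m:ℝ)+4)*l2)] := by
    ext t j
    simp only [Matrix.add_apply, Matrix.mul_apply, Matrix.neg_apply, Matrix.smul_apply]
    fin_cases t <;> fin_cases j <;>
      simp only [hU, hV, Matrix.add_apply, Matrix.mul_apply, Matrix.neg_apply,
        Matrix.smul_apply, Pi.smul_apply, smul_eq_mul, Matrix.one_apply, Fin.sum_univ_succ, Fin.val_succ,
        Fin.val_zero, Nat.succ_ne_zero, Nat.add_one_ne_zero, if_true, if_false,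
        Finset.sum_const, Finset.card_univ, Fintype.card_fin, nsmul_eq_mul,
        Matrix.of_apply, Matrix.cons_val', Matrix.cons_val_zero, Matrix.cons_val_one, Matrix.head_cons,
        Matrix.head_fin_const, Matrix.empty_val', Matrix.cons_val_fin_one,
        Fin.zero_eta, Fin.mk_one, eq_self_iff_true, one_ne_zero, Fin.isValue,
        reduceIte] <;>
      (push_cast; field_simp; ring)
  rw [hVU, Matrix.det_fin_two]
  simp only [Matrix.of_apply, Matrix.cons_val', Matrix.cons_val_zero, Matrix.cons_val_one, Matrix.head_cons,
    Matrix.head_fin_const, Matrix.empty_val', Matrix.cons_val_fin_one, Fintype.card_fin]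
  simp only [eval_mul, eval_pow, eval_sub, eval_add, eval_X, eval_C]
  have hfact4 : (((m+4) * (m+3).factorial : ℕ) : ℝ) = (m+4) * ((m+3) * l2) := by
    push_cast [hfact3]; ring
  rw [hfact4, hfact3]
  have hxs : x = s + l2 := by rw [hsdef]; ring
  rw [hxs, show m + 5 = (m+3) + 2 by ring, pow_add]
  field_simp
  ring

end Aux

open Polynomial in
/-- For `n ≥ 5`, the characteristic polynomial of the matrix of `C(n,n-1;1)` on the
permutation module is `(x - (n-1)(n-2)!)(x - (n-3)!)^{n-2}(x + (n-2)!)`. -/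
theorem stmt17 (n : ℕ) (hn : 5 ≤ n) :
    (permMat n).charpoly =
      (X - C (((n - 1) * (n - 2).factorial : ℕ) : ℝ)) *
      (X - C (((n - 3).factorial : ℕ) : ℝ)) ^ (n - 2) *
      (X + C (((n - 2).factorial : ℕ) : ℝ)) := by
  have hMx : permMat n = Mx n := by
    ext i j
    simp only [permMat, Mx]
    rw [count_eq n hn i j]
    split_ifs <;> push_cast <;> ring
  obtain ⟨m, rfl⟩ : ∃ m, n = m + 5 := ⟨n - 5, by omega⟩
  rw [hMx]
  simp only [show m + 5 - 1 = m + 4 from by omega, show m + 5 - 2 = m + 3 from by omega,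
    show m + 5 - 3 = m + 2 from by omega]
  exact MxCharpoly m
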